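/- Let $n, B_1$ be natural numbers with $2 \le n$ and $B_1 > 2n$, and set $s := B_1 - 2n + 1$. Let $c, d \in \mathbb{C}$ with $c^n = 1$ and $c^{B_1 - n} \ne 1$, and define $\varphi(t) := c t + d t^s$. Let $q, \eta_2 : \mathbb{C} \to \mathbb{C}$ satisfy $q(t) - \tfrac{B_1}{n} t^{B_1 - n} = o(t^{B_1 - n})$ and $\eta_2(t) - t^{B_1} = o(t^{B_1})$ as $t \to 0$. For $(A, B) \in \mathbb{C}^2$ define $$W(t) := A\, t^{B_1 - n}\, \big(-q(t),\ 1,\ 0,\ 0\big) + B\, \big(q(t) - q(\varphi(t)),\ 0,\ t^n - \varphi(t)^n,\ \eta_2(t) - \eta_2(\varphi(t))\big) \in \mathbb{C}^4.$$ Then $$\frac{1}{t^{B_1 - n}}\, W(t) \longrightarrow \Big(B\,\tfrac{B_1}{n}\,(1 - c^{B_1 - n}),\ A,\ -n\, c^{n-1}\, d\, B,\ 0\Big)$$ as $t \to 0$ along $t \ne 0$; moreover if $(A,B) \ne (0,0)$ this limit vector is nonzero (and its last coordinate is zero). -/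

import Mathlib

open Filter Asymptotics Topology

/-- Case A (`B₁ > 2n`) of the proof of Theorem 3.8 of the paper. -/
theorem stmt_12 (n B1 : ℕ) (hn : 2 ≤ n) (hB1 : 2 * n < B1)
    (s : ℕ) (hs : s = B1 - 2 * n + 1)
    (c d : ℂ) (hc : c ^ n = 1) (hc' : c ^ (B1 - n) ≠ 1)
    (φ : ℂ → ℂ) (hφ : ∀ t, φ t = c * t + d * t ^ s)
    (q η2 : ℂ → ℂ)
    (hq : (fun t => q t - ((B1 : ℂ) / (n : ℂ)) * t ^ (B1 - n))
      =o[𝓝[≠] (0:ℂ)] fun t => t ^ (B1 - n))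
    (hη2 : (fun t => η2 t - t ^ B1) =o[𝓝[≠] (0:ℂ)] fun t => t ^ B1)
    (A B : ℂ)
    (W : ℂ → Fin 4 → ℂ)
    (hW : ∀ t, W t =
      (A * t ^ (B1 - n)) • (![-q t, 1, 0, 0] : Fin 4 → ℂ) +
      B • (![q t - q (φ t), 0, t ^ n - φ t ^ n, η2 t - η2 (φ t)] : Fin 4 → ℂ)) :
    Tendsto (fun t => (t ^ (B1 - n))⁻¹ • W t) (𝓝[≠] (0:ℂ))
      (𝓝 ![B * ((B1 : ℂ) / (n : ℂ)) * (1 - c ^ (B1 - n)), A,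
            -(n : ℂ) * c ^ (n - 1) * d * B, 0]) ∧
    ((A, B) ≠ (0, 0) →
      (![B * ((B1 : ℂ) / (n : ℂ)) * (1 - c ^ (B1 - n)), A,
         -(n : ℂ) * c ^ (n - 1) * d * B, 0] : Fin 4 → ℂ) ≠ 0) := by
  have hn0 : (n : ℂ) ≠ 0 := by exact_mod_cast (by omega : n ≠ 0)
  have hB10 : (B1 : ℂ) ≠ 0 := by exact_mod_cast (by omega : B1 ≠ 0)
  have hc0 : c ≠ 0 := by
    intro h; rw [h, zero_pow (by omega : n ≠ 0)] at hc; exact zero_ne_one hc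
  set k := B1 - n with hk
  set m := s - 1 with hm
  have hm0 : m ≠ 0 := by omega
  have hk0 : k ≠ 0 := by omega
  have hsm : s = m + 1 := by omega
  have hkm : k = n + m := by omega
  have hB1k : B1 = n + k := by omega
  set r : ℂ → ℂ := fun t => c + d * t ^ m with hr
  have hφ' : ∀ t, φ t = t * r t := by
    intro t; rw [hφ, hsm, hr]; ring
  have hrc : Tendsto r (𝓝[≠] (0:ℂ)) (𝓝 c) := by
    have : Tendsto r (𝓝 (0:ℂ)) (𝓝 (r 0)) := (Continuous.tendsto (by fun_prop) 0)
    simpa [hr, zero_pow hm0] using this.mono_left nhdsWithin_le_nhds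
  have hφ0 : Tendsto φ (𝓝[≠] (0:ℂ)) (𝓝[≠] (0:ℂ)) := by
    rw [tendsto_nhdsWithin_iff]
    constructor
    · have h := ((tendsto_id.mono_left nhdsWithin_le_nhds).mul hrc :
        Tendsto (fun t => t * r t) (𝓝[≠] (0:ℂ)) (𝓝 (0 * c)))
      rw [zero_mul] at h
      exact h.congr fun t => (hφ' t).symm
    · filter_upwards [hrc.eventually_ne hc0, self_mem_nhdsWithin] with t h1 h2
      simp only [Set.mem_compl_iff, Set.mem_singleton_iff]
      rw [hφ' t]
      exact mul_ne_zero h2 h1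
  have hpm : Tendsto (fun t : ℂ => t ^ m) (𝓝[≠] (0:ℂ)) (𝓝[≠] (0:ℂ)) := by
    rw [tendsto_nhdsWithin_iff]
    refine ⟨?_, ?_⟩
    · have := (continuous_pow m).tendsto (0:ℂ)
      simpa [zero_pow hm0] using this.mono_left nhdsWithin_le_nhds
    · filter_upwards [self_mem_nhdsWithin] with t ht
      simp only [Set.mem_compl_iff, Set.mem_singleton_iff]
      exact pow_ne_zero m ht
  have htk0 : Tendsto (fun t : ℂ => t ^ k) (𝓝[≠] (0:ℂ)) (𝓝 0) := by
    have := (continuous_pow k).tendsto (0:ℂ)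
    simpa [zero_pow hk0] using this.mono_left nhdsWithin_le_nhds
  -- big-O facts
  have hrO : ∀ j : ℕ, (fun t => r t ^ j) =O[𝓝[≠] (0:ℂ)] (fun _ => (1:ℂ)) :=
    fun j => (hrc.pow j).isBigO_one ℂ
  have hφO : ∀ j : ℕ, (fun t => φ t ^ j) =O[𝓝[≠] (0:ℂ)] (fun t => t ^ j) := by
    intro j
    have h := (isBigO_refl (fun t : ℂ => t ^ j) (𝓝[≠] (0:ℂ))).mul (hrO j)
    simpa [hφ', mul_pow] using h
  have hqφ : (fun t => q (φ t) - ((B1 : ℂ) / (n : ℂ)) * (φ t) ^ k)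
      =o[𝓝[≠] (0:ℂ)] (fun t => t ^ k) :=
    (hq.comp_tendsto hφ0).trans_isBigO (hφO k)
  -- coordinate 0
  have h0 : Tendsto (fun t => (t ^ k)⁻¹ * (A * t ^ k * (-q t) + B * (q t - q (φ t))))
      (𝓝[≠] (0:ℂ)) (𝓝 (B * ((B1 : ℂ) / (n : ℂ)) * (1 - c ^ k))) := by
    have hq0 : Tendsto q (𝓝[≠] (0:ℂ)) (𝓝 0) := by
      have h := (hq.isBigO.trans_tendsto htk0).add (htk0.const_mul ((B1 : ℂ) / (n : ℂ)))
      simpa using h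
    have hEt : Tendsto (fun t => (q t - ((B1 : ℂ) / (n : ℂ)) * t ^ k) / t ^ k)
        (𝓝[≠] (0:ℂ)) (𝓝 0) := hq.tendsto_div_nhds_zero
    have hEφ : Tendsto (fun t => (q (φ t) - ((B1 : ℂ) / (n : ℂ)) * (φ t) ^ k) / t ^ k)
        (𝓝[≠] (0:ℂ)) (𝓝 0) := hqφ.tendsto_div_nhds_zero
    have hmain : Tendsto (fun t => ((B1 : ℂ) / (n : ℂ)) * (1 - r t ^ k))
        (𝓝[≠] (0:ℂ)) (𝓝 (((B1 : ℂ) / (n : ℂ)) * (1 - c ^ k))) :=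
      tendsto_const_nhds.mul (tendsto_const_nhds.sub (hrc.pow k))
    have hcomb := ((hq0.neg.const_mul A).add
      ((hmain.add (hEt.sub hEφ)).const_mul B))
    have hlim : A * -(0:ℂ) + B * (((B1 : ℂ) / (n : ℂ)) * (1 - c ^ k) + (0 - 0))
        = B * ((B1 : ℂ) / (n : ℂ)) * (1 - c ^ k) := by ring
    rw [hlim] at hcomb
    refine Tendsto.congr' ?_ hcomb
    filter_upwards [self_mem_nhdsWithin] with t ht
    have htk : (t : ℂ) ^ k ≠ 0 := pow_ne_zero k ht
    rw [show φ t ^ k = t ^ k * r t ^ k from by rw [hφ' t, mul_pow]]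
    field_simp
    ring
  -- coordinate 1
  have h1 : Tendsto (fun t => (t ^ k)⁻¹ * (A * t ^ k * 1 + B * 0))
      (𝓝[≠] (0:ℂ)) (𝓝 A) := by
    have : ∀ᶠ t in 𝓝[≠] (0:ℂ),
        (t ^ k)⁻¹ * (A * t ^ k * 1 + B * 0) = A := by
      filter_upwards [self_mem_nhdsWithin] with t ht
      have : (t : ℂ) ^ k ≠ 0 := pow_ne_zero k ht
      field_simp
      ring
    exact (tendsto_congr' this).mpr tendsto_const_nhds
  -- coordinate 2
  have h2 : Tendsto (fun t => (t ^ k)⁻¹ * (A * t ^ k * 0 + B * (t ^ n - φ t ^ n)))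
      (𝓝[≠] (0:ℂ)) (𝓝 (-(n : ℂ) * c ^ (n - 1) * d * B)) := by
    have hg : HasDerivAt (fun u : ℂ => (c + d * u) ^ n) ((n : ℂ) * c ^ (n - 1) * d) 0 := by
      have h1 : HasDerivAt (fun u : ℂ => c + d * u) d 0 := by
        simpa using ((hasDerivAt_id (0:ℂ)).const_mul d).const_add c
      simpa using h1.fun_pow n
    have hslope := (hasDerivAt_iff_tendsto_slope.mp hg).comp hpm
    have hs2 : Tendsto (fun t : ℂ => ((c + d * t ^ m) ^ n - 1) / t ^ m)
        (𝓝[≠] (0:ℂ)) (𝓝 ((n : ℂ) * c ^ (n - 1) * d)) := by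
      refine hslope.congr fun t => ?_
      simp [Function.comp, slope_def_field, hc]
    have hcomb := (hs2.neg.const_mul B)
    have hlim : B * -((n : ℂ) * c ^ (n - 1) * d) = -(n : ℂ) * c ^ (n - 1) * d * B := by ring
    rw [hlim] at hcomb
    refine Tendsto.congr' ?_ hcomb
    filter_upwards [self_mem_nhdsWithin] with t ht
    have htm : (t : ℂ) ^ m ≠ 0 := pow_ne_zero m ht
    have htn : (t : ℂ) ^ n ≠ 0 := pow_ne_zero n ht
    rw [show φ t ^ n = t ^ n * r t ^ n from by rw [hφ' t, mul_pow],
        show (t : ℂ) ^ k = t ^ n * t ^ m from by rw [hkm, pow_add], hr]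
    field_simp
    ring
  -- coordinate 3
  have h3 : Tendsto (fun t => (t ^ k)⁻¹ * (A * t ^ k * 0 + B * (η2 t - η2 (φ t))))
      (𝓝[≠] (0:ℂ)) (𝓝 0) := by
    have hbo : (fun t : ℂ => t ^ B1) =o[𝓝[≠] (0:ℂ)] (fun t => t ^ k) := by
      have hn1 : Tendsto (fun t : ℂ => t ^ n) (𝓝[≠] (0:ℂ)) (𝓝 0) := by
        have := (continuous_pow n).tendsto (0:ℂ)
        simpa [zero_pow (by omega : n ≠ 0)] using this.mono_left nhdsWithin_le_nhds
      have h1 : (fun t : ℂ => t ^ n) =o[𝓝[≠] (0:ℂ)] (fun _ => (1:ℂ)) :=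
        (isLittleO_one_iff ℂ).mpr hn1
      have := h1.mul_isBigO (isBigO_refl (fun t : ℂ => t ^ k) (𝓝[≠] (0:ℂ)))
      simpa [← pow_add, ← hB1k] using this
    have hφB : (fun t => φ t ^ B1) =o[𝓝[≠] (0:ℂ)] (fun t => t ^ k) :=
      (hφO B1).trans_isLittleO hbo
    have he2t : (fun t => η2 t - t ^ B1) =o[𝓝[≠] (0:ℂ)] (fun t => t ^ k) :=
      hη2.trans hbo
    have he2φ : (fun t => η2 (φ t) - φ t ^ B1) =o[𝓝[≠] (0:ℂ)] (fun t => t ^ k) :=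
      ((hη2.comp_tendsto hφ0).trans_isBigO (hφO B1)).trans hbo
    have hsum : (fun t => η2 t - η2 (φ t)) =o[𝓝[≠] (0:ℂ)] (fun t => t ^ k) := by
      have := (he2t.sub he2φ).add (hbo.sub hφB)
      refine this.congr (fun t => by ring) (fun t => rfl)
    have hdiv := hsum.tendsto_div_nhds_zero
    have hcomb := hdiv.const_mul B
    rw [mul_zero] at hcomb
    refine Tendsto.congr' ?_ hcomb
    filter_upwards [self_mem_nhdsWithin] with t ht
    have htk : (t : ℂ) ^ k ≠ 0 := pow_ne_zero k ht
    field_simp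
    ring
  constructor
  · rw [tendsto_pi_nhds]
    intro i
    fin_cases i
    · simpa [hW, Matrix.cons_val_zero, smul_eq_mul] using h0
    · simpa [hW, smul_eq_mul] using h1
    · simpa [hW, smul_eq_mul] using h2
    · simpa [hW, smul_eq_mul] using h3
  · intro hAB hzero
    have hA : A = 0 := by
      have := congrFun hzero 1
      simpa using this
    have hB : B = 0 := by
      have h := congrFun hzero 0
      simp only [Matrix.cons_val_zero, Pi.zero_apply] at h
      have h1c : (1 : ℂ) - c ^ k ≠ 0 := sub_ne_zero.mpr (Ne.symm hc')
      have hd : ((B1 : ℂ) / (n : ℂ)) ≠ 0 := div_ne_zero hB10 hn0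
      rcases mul_eq_zero.mp h with h' | h'
      · rcases mul_eq_zero.mp h' with h'' | h''
        · exact h''
        · exact absurd h'' hd
      · exact absurd h' h1c
    exact hAB (by simp [hA, hB])
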